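/- arXiv:1604.00934 — 3 statements merged into one kernel-verified Lean document; each statement's English description precedes it below -/
import Mathlib

section
/- Let G₁ and G₂ be simple graphs on the same vertex set of n vertices with maximum degrees Δ₁ and Δ₂ respectively. If Δ₁·Δ₂ < n/2, then G₁ and G₂ pack, i.e., there exists a permutation σ of the vertex set such that the edge sets of G₁ and σ(G₂) are disjoint. -/
open Finset

/-- Sauer–Spencer theorem: if `Δ₁·Δ₂ < n/2` then `G₁` and `G₂` pack. -/
theorem stmt_11 {V : Type*} [Fintype V] [DecidableEq V]
    (G₁ G₂ : SimpleGraph V) [DecidableRel G₁.Adj] [DecidableRel G₂.Adj]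
    (h : (G₁.maxDegree : ℝ) * (G₂.maxDegree : ℝ) < (Fintype.card V : ℝ) / 2) :
    ∃ σ : Equiv.Perm V, ∀ u v : V, G₂.Adj u v → ¬ G₁.Adj (σ u) (σ v) := by
  classical
  set Δ₁ := G₁.maxDegree with hΔ₁
  set Δ₂ := G₂.maxDegree with hΔ₂
  have hn : Δ₁ * Δ₂ + Δ₂ * Δ₁ < Fintype.card V := by
    have h2 : ((Δ₁ * Δ₂ + Δ₂ * Δ₁ : ℕ) : ℝ) < (Fintype.card V : ℝ) := by
      push_cast; linarith
    exact_mod_cast h2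
  set S : Equiv.Perm V → Finset (V × V) := fun σ =>
    Finset.univ.filter (fun p : V × V => G₂.Adj p.1 p.2 ∧ G₁.Adj (σ p.1) (σ p.2)) with hS
  obtain ⟨σ, -, hmin⟩ := Finset.exists_min_image Finset.univ (fun σ => (S σ).card)
    ⟨1, Finset.mem_univ 1⟩
  refine ⟨σ, ?_⟩
  by_contra hbad
  push_neg at hbad
  obtain ⟨u, v, huv, hcon⟩ := hbad
  have huvS : (u, v) ∈ S σ := by simp [hS, huv, hcon]
  -- the two "bad" sets
  set B₁ : Finset V :=
    (G₂.neighborFinset u).biUnion (fun z => (G₁.neighborFinset (σ z)).image σ.symm) with hB₁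
  set B₂ : Finset V :=
    (G₁.neighborFinset (σ u)).biUnion (fun y => G₂.neighborFinset (σ.symm y)) with hB₂
  have hB₁card : B₁.card ≤ Δ₂ * Δ₁ := by
    calc B₁.card ≤ ∑ z ∈ G₂.neighborFinset u, ((G₁.neighborFinset (σ z)).image σ.symm).card :=
          Finset.card_biUnion_le
      _ ≤ ∑ z ∈ G₂.neighborFinset u, Δ₁ := by
          refine Finset.sum_le_sum fun z _ => ?_
          calc ((G₁.neighborFinset (σ z)).image σ.symm).card
              ≤ (G₁.neighborFinset (σ z)).card := Finset.card_image_le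
            _ = G₁.degree (σ z) := G₁.card_neighborFinset_eq_degree (σ z)
            _ ≤ Δ₁ := G₁.degree_le_maxDegree (σ z)
      _ = G₂.degree u * Δ₁ := by rw [Finset.sum_const, smul_eq_mul,
            G₂.card_neighborFinset_eq_degree u]
      _ ≤ Δ₂ * Δ₁ := Nat.mul_le_mul_right _ (G₂.degree_le_maxDegree u)
  have hB₂card : B₂.card ≤ Δ₁ * Δ₂ := by
    calc B₂.card ≤ ∑ y ∈ G₁.neighborFinset (σ u), (G₂.neighborFinset (σ.symm y)).card :=
          Finset.card_biUnion_le
      _ ≤ ∑ y ∈ G₁.neighborFinset (σ u), Δ₂ := by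
          refine Finset.sum_le_sum fun y _ => ?_
          rw [G₂.card_neighborFinset_eq_degree]
          exact G₂.degree_le_maxDegree _
      _ = G₁.degree (σ u) * Δ₂ := by rw [Finset.sum_const, smul_eq_mul,
            G₁.card_neighborFinset_eq_degree]
      _ ≤ Δ₁ * Δ₂ := Nat.mul_le_mul_right _ (G₁.degree_le_maxDegree _)
  have huB₁ : u ∈ B₁ := by
    refine Finset.mem_biUnion.mpr ⟨v, ?_, ?_⟩
    · simpa [SimpleGraph.mem_neighborFinset] using huv
    · exact Finset.mem_image.mpr ⟨σ u, by
        simpa [SimpleGraph.mem_neighborFinset] using hcon.symm, σ.symm_apply_apply u⟩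
  have huB₂ : u ∈ B₂ := by
    refine Finset.mem_biUnion.mpr ⟨σ v, ?_, ?_⟩
    · simpa [SimpleGraph.mem_neighborFinset] using hcon
    · simpa [SimpleGraph.mem_neighborFinset] using huv.symm
  -- find a good vertex w
  have hcard : (insert v (B₁ ∪ B₂)).card < Fintype.card V := by
    have h1 : (B₁ ∪ B₂).card + (B₁ ∩ B₂).card = B₁.card + B₂.card :=
      Finset.card_union_add_card_inter B₁ B₂
    have h2 : 1 ≤ (B₁ ∩ B₂).card :=
      Finset.card_pos.mpr ⟨u, Finset.mem_inter.mpr ⟨huB₁, huB₂⟩⟩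
    have h3 : (insert v (B₁ ∪ B₂)).card ≤ (B₁ ∪ B₂).card + 1 :=
      Finset.card_insert_le _ _
    omega
  obtain ⟨w, hw⟩ : ∃ w, w ∉ insert v (B₁ ∪ B₂) := by
    by_contra hc
    push_neg at hc
    have : (Finset.univ : Finset V) ⊆ insert v (B₁ ∪ B₂) := fun x _ => hc x
    have := Finset.card_le_card this
    simp only [Finset.card_univ] at this
    omega
  have hwv : w ≠ v := fun e => hw (by simp [e])
  have hwB₁ : w ∉ B₁ := fun e => hw (by simp [e])
  have hwB₂ : w ∉ B₂ := fun e => hw (by simp [e])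
  have hwu : w ≠ u := fun e => hwB₁ (e ▸ huB₁)
  -- consequences of w being good
  have key₁ : ∀ z, G₂.Adj u z → ¬ G₁.Adj (σ z) (σ w) := by
    intro z hz hadj
    exact hwB₁ (Finset.mem_biUnion.mpr ⟨z, by
      simpa [SimpleGraph.mem_neighborFinset] using hz,
      Finset.mem_image.mpr ⟨σ w, by
        simpa [SimpleGraph.mem_neighborFinset] using hadj, σ.symm_apply_apply w⟩⟩)
  have key₂ : ∀ z, G₁.Adj (σ u) (σ z) → ¬ G₂.Adj z w := by
    intro z hadj hz
    exact hwB₂ (Finset.mem_biUnion.mpr ⟨σ z, by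
      simpa [SimpleGraph.mem_neighborFinset] using hadj, by
      simpa [SimpleGraph.mem_neighborFinset] using hz⟩)
  -- the swapped permutation
  set τ := Equiv.swap u w with hτ
  set σ' := σ * τ with hσ'
  have hσ'app : ∀ x, σ' x = σ (τ x) := fun x => rfl
  -- S σ' ⊆ (S σ).erase (u, v)
  have hsub : S σ' ⊆ (S σ).erase (u, v) := by
    intro p hp
    obtain ⟨a, b⟩ := p
    simp only [hS, Finset.mem_filter, Finset.mem_univ, true_and] at hp
    obtain ⟨hab, hG1⟩ := hp
    rw [hσ'app, hσ'app] at hG1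
    have hne : a ≠ b := hab.ne
    refine Finset.mem_erase.mpr ⟨?_, ?_⟩
    case _ =>
      -- (a, b) ≠ (u, v)
      intro he
      rw [Prod.mk.injEq] at he
      obtain ⟨hau, hbv⟩ := he
      subst hau; subst hbv
      rw [hτ, Equiv.swap_apply_left,
        Equiv.swap_apply_of_ne_of_ne hab.ne' (Ne.symm hwv)] at hG1
      exact key₁ b hab hG1.symm
    case _ =>
      -- membership in S σ (and handle the impossible cases)
      simp only [hS, Finset.mem_filter, Finset.mem_univ, true_and]
      refine ⟨hab, ?_⟩
      by_cases hau : a = u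
      · subst hau
        by_cases hbw : b = w
        · subst hbw
          rw [hτ] at hG1
          simp only [Equiv.swap_apply_left, Equiv.swap_apply_right] at hG1
          exact hG1.symm
        · have hbu : b ≠ a := hne.symm
          rw [hτ] at hG1
          rw [Equiv.swap_apply_left, Equiv.swap_apply_of_ne_of_ne hbu hbw] at hG1
          exact absurd hG1.symm (key₁ b hab)
      · by_cases haw : a = w
        · subst haw
          by_cases hbu : b = u
          · subst hbu
            rw [hτ] at hG1
            simp only [Equiv.swap_apply_left, Equiv.swap_apply_right] at hG1
            exact hG1.symm
          · have hbw : b ≠ a := hne.symm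
            rw [hτ] at hG1
            rw [Equiv.swap_apply_right, Equiv.swap_apply_of_ne_of_ne hbu hbw] at hG1
            exact absurd hG1 (fun hG => key₂ b hG hab.symm)
        · rw [hτ, Equiv.swap_apply_of_ne_of_ne hau haw] at hG1
          by_cases hbu : b = u
          · subst hbu
            rw [Equiv.swap_apply_left] at hG1
            exact absurd hG1 (key₁ a hab.symm)
          · by_cases hbw : b = w
            · subst hbw
              rw [Equiv.swap_apply_right] at hG1
              exact absurd hG1.symm (fun hG => key₂ a hG hab)
            · rw [Equiv.swap_apply_of_ne_of_ne hbu hbw] at hG1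
              exact hG1
  -- contradiction with minimality
  have h1 : (S σ').card < (S σ).card := by
    calc (S σ').card ≤ ((S σ).erase (u, v)).card := Finset.card_le_card hsub
      _ < (S σ).card := Finset.card_erase_lt_of_mem huvS
  exact absurd (hmin σ' (Finset.mem_univ σ')) (by omega)
end

section
/- Let ε ∈ (0, 1/2) and δ with 0 < δ ≤ ε/10. Let z, n be positive integers and M a positive integer with Mz ≤ n. Let X ⊆ Z with z/(2(1+δ)) < |X| ≤ z/2 and Y ⊆ W with |Y| ≤ n/2. Suppose d_H(x) ≤ M(1+δ) for all x ∈ X, d_H(y) = 1 for all y ∈ W, every vertex of W has more than (1/2 + ε/2)z neighbours in Z, so that e(X, Y) ≥ |Y|·((ε/2)z + |X| − z/2). Then d_H(X) ≤ e(X,Y) + (n − |Y|). -/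
/-- Case (c) of the key embedding lemma: the Gale–Ryser cut condition
`d_H(X) ≤ e(X,Y) + (n − |Y|)` when `z/(2(1+δ)) < |X| ≤ z/2` and `|Y| ≤ n/2`. -/
theorem stmt_15 {V : Type*} [Fintype V] [DecidableEq V]
    (G : SimpleGraph V) [DecidableRel G.Adj]
    (ε δ : ℝ) (hε : ε ∈ Set.Ioo (0:ℝ) (1/2)) (hδ0 : 0 < δ) (hδ : δ ≤ ε / 10)
    (Z W : Finset V) (z n : ℕ) (hz : Z.card = z) (hw : W.card = n)
    (hzpos : 0 < z) (hnpos : 0 < n)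
    (M : ℕ) (hM : 0 < M) (hMz : M * z ≤ n)
    (dH : V → ℕ) (X Y : Finset V) (hXZ : X ⊆ Z) (hYW : Y ⊆ W)
    (hXl : (z : ℝ) / (2 * (1 + δ)) < X.card) (hXu : (X.card : ℝ) ≤ z / 2)
    (hYu : (Y.card : ℝ) ≤ (n : ℝ) / 2)
    (hdX : ∀ x ∈ X, (dH x : ℝ) ≤ M * (1 + δ))
    (hdW : ∀ y ∈ W, dH y = 1)
    (hdegW : ∀ y ∈ W, (1 / 2 + ε / 2) * z < ((G.neighborFinset y ∩ Z).card : ℝ))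
    (hE : (Y.card : ℝ) * ((ε / 2) * z + X.card - z / 2) ≤
      ∑ x ∈ X, ((G.neighborFinset x ∩ Y).card : ℝ)) :
    (∑ x ∈ X, (dH x : ℝ)) ≤
      (∑ x ∈ X, ((G.neighborFinset x ∩ Y).card : ℝ)) + ((n : ℝ) - Y.card) := by
  have hz1 : (1:ℝ) ≤ z := by exact_mod_cast hzpos
  have hY0 : (0:ℝ) ≤ Y.card := by positivity
  have hX0 : (0:ℝ) ≤ X.card := by positivity
  have hMn : (M:ℝ) * z ≤ n := by exact_mod_cast hMz
  have hM1 : (1:ℝ) ≤ M := by exact_mod_cast hM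
  have hε0 := hε.1
  have hε2 := hε.2
  have hsum : (∑ x ∈ X, (dH x : ℝ)) ≤ X.card * (M * (1 + δ)) := by
    calc (∑ x ∈ X, (dH x : ℝ)) ≤ ∑ _x ∈ X, (M : ℝ) * (1 + δ) :=
          Finset.sum_le_sum hdX
      _ = X.card * (M * (1 + δ)) := by
          rw [Finset.sum_const, nsmul_eq_mul]
  have hXz : (z:ℝ) < 2 * (1 + δ) * X.card := by
    rw [div_lt_iff₀ (by positivity)] at hXl
    linarith
  have hc : δ ≤ ε / 2 * z + X.card - z / 2 := by
    nlinarith [mul_nonneg hδ0.le hδ0.le, mul_nonneg hε0.le hδ0.le]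
  nlinarith [hE, hsum, mul_le_mul hXu (le_refl ((M:ℝ)*(1+δ))) (by positivity) (by positivity),
    mul_nonneg hY0 (sub_nonneg.mpr hc),
    mul_nonneg (by linarith : (0:ℝ) ≤ 1 - δ) (by linarith : (0:ℝ) ≤ (n:ℝ)/2 - Y.card)]
end

section
/- Let ε ∈ (0, 1/2) and δ with 0 < δ ≤ ε/10. Let z, n be positive integers with z > 2/ε, M a positive integer with Mz ≤ n. Let X ⊆ Z with |X| > z/(2(1+δ)) and Y ⊆ W with |Y| > n/2. Suppose d_H(X) ≤ M(1+δ)|X|, all W-degrees in H equal 1, and e(X, Y) ≥ |X|·(|Y| − n/2 + εn). Then d_H(X) ≤ (n − |Y|) + e(X, Y). -/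
/-- Case (e) of the key embedding lemma:
`d_H(X) ≤ (n − |Y|) + e(X,Y)` when `|X| > z/(2(1+δ))` and `|Y| > n/2`. -/
theorem stmt_17 {V : Type*} [Fintype V] [DecidableEq V]
    (G : SimpleGraph V) [DecidableRel G.Adj]
    (ε δ : ℝ) (hε : ε ∈ Set.Ioo (0:ℝ) (1/2)) (hδ0 : 0 < δ) (hδ : δ ≤ ε / 10)
    (Z W : Finset V) (z n : ℕ) (hz : Z.card = z) (hw : W.card = n)
    (hzpos : 0 < z) (hnpos : 0 < n) (hzε : 2 / ε < (z : ℝ))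
    (M : ℕ) (hM : 0 < M) (hMz : M * z ≤ n)
    (dH : V → ℕ) (X Y : Finset V) (hXZ : X ⊆ Z) (hYW : Y ⊆ W)
    (hXl : (z : ℝ) / (2 * (1 + δ)) < X.card)
    (hYl : (n : ℝ) / 2 < Y.card)
    (hdX : (∑ x ∈ X, (dH x : ℝ)) ≤ M * (1 + δ) * X.card)
    (hdW : ∀ y ∈ W, dH y = 1)
    (hE : (X.card : ℝ) * ((Y.card : ℝ) - (n : ℝ) / 2 + ε * n) ≤
      ∑ x ∈ X, ((G.neighborFinset x ∩ Y).card : ℝ)) :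
    (∑ x ∈ X, (dH x : ℝ)) ≤
      ((n : ℝ) - Y.card) + ∑ x ∈ X, ((G.neighborFinset x ∩ Y).card : ℝ) := by
  obtain ⟨hε0, hε2⟩ := hε
  have hXc : (0:ℝ) < X.card := lt_of_le_of_lt (by positivity) hXl
  have hYn : (Y.card:ℝ) ≤ n := by
    have := Finset.card_le_card hYW
    rw [hw] at this
    exact_mod_cast this
  have hMz' : (M:ℝ) * z ≤ n := by exact_mod_cast hMz
  have hM1 : (1:ℝ) ≤ M := by exact_mod_cast hM
  have hzε' : 2 < ε * z := by
    have := (div_lt_iff₀ hε0).mp hzε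
    linarith
  have hεn : 2 * (M:ℝ) < ε * n := by
    nlinarith
  have hkey : (M:ℝ) * (1 + δ) ≤ (Y.card:ℝ) - (n:ℝ)/2 + ε * n := by
    nlinarith
  have h2 : (M:ℝ) * (1 + δ) * X.card ≤ (X.card:ℝ) * ((Y.card:ℝ) - (n:ℝ)/2 + ε * n) := by
    rw [mul_comm ((X.card:ℝ))]
    exact mul_le_mul_of_nonneg_right hkey hXc.le
  linarith
end
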